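/- On {0,1}^n, the identities (2x_r − 1)² = 1 and (2x_r − 1)·x_r = x_r hold for every coordinate, and consequently, with G(x) := F(x) + Σ_{i=1}^{⌊n/2⌋} x_i(x_{2i} − 1) − (1/2)Σ_{i=1}^n x_i, one has ∂_r G(x) = (2x_r − 1)·{ Σ_{i=1}^n x_i + Σ_{i=1}^{n−r} x_i − (n − ⌊r/2⌋) − (1/2)χ(r ≤ n/2) } − (1/2)χ(r ≤ n/2) − 1/2 for all 1 ≤ r ≤ n. -/

import Mathlib

open Finset

/-- The monochromatic-Schur-triple counting polynomial. -/
noncomputable def F (n : ℕ) (x : ℕ → ℝ) : ℝ :=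
  ∑ p ∈ (Finset.Icc 1 n ×ˢ Finset.Icc 1 n).filter
      (fun p => p.1 < p.2 ∧ p.1 + p.2 ≤ n),
    (x p.1 * x p.2 * x (p.1 + p.2)
      + (1 - x p.1) * (1 - x p.2) * (1 - x (p.1 + p.2)))

/-- The O(n)-modified function G. -/
noncomputable def G (n : ℕ) (x : ℕ → ℝ) : ℝ :=
  F n x + ∑ i ∈ Finset.Icc 1 (n / 2), x i * (x (2 * i) - 1)
    - (1 / 2) * ∑ i ∈ Finset.Icc 1 n, x i

/-- Indicator function. -/
noncomputable def chi (P : Prop) [Decidable P] : ℝ := if P then 1 else 0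


lemma sum_shift (f : ℕ → ℝ) (a b r : ℕ) :
    ∑ j ∈ Ioc a b, f (r + j) = ∑ k ∈ Ioc (r + a) (r + b), f k := by
  rw [← Finset.image_add_left_Ioc, Finset.sum_image (by intro a _ b _ h; exact Nat.add_left_cancel h)]

lemma sum_reflect (f : ℕ → ℝ) (q r : ℕ) (h : q < r) :
    ∑ i ∈ Ioc 0 q, f (r - i) = ∑ k ∈ Ioc (r - q - 1) (r - 1), f k := by
  apply Finset.sum_nbij' (fun i => r - i) (fun k => r - k) <;> intros <;>
    simp_all [mem_Ioc] <;> omega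

lemma Icc1 (k : ℕ) (f : ℕ → ℝ) : ∑ i ∈ Icc 1 k, f i = ∑ i ∈ Ioc 0 k, f i := by
  apply Finset.sum_congr _ (fun _ _ => rfl)
  ext i; simp [mem_Icc, mem_Ioc]; omega


lemma F_diff (n r : ℕ) (x : ℕ → ℝ) (h1 : 1 ≤ r) (h2 : r ≤ n) :
    F n x - F n (Function.update x r (1 - x r)) =
      (2 * x r - 1) *
        ((∑ j ∈ Ioc r (n - r), (x j + x (r + j) - 1))
          + (∑ i ∈ Ioc 0 (min (r - 1) (n - r)), (x i + x (i + r) - 1))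
          + (∑ i ∈ Ioc 0 ((r - 1) / 2), (x i + x (r - i) - 1))) := by
  classical
  set x' := Function.update x r (1 - x r) with hx'
  have hxr : ∀ i, i ≠ r → x' i = x i := fun i hi => Function.update_of_ne hi _ _
  have hxr2 : x' r = 1 - x r := Function.update_self _ _ _
  set S := (Finset.Icc 1 n ×ˢ Finset.Icc 1 n).filter
      (fun p : ℕ × ℕ => p.1 < p.2 ∧ p.1 + p.2 ≤ n) with hS
  set d : ℕ × ℕ → ℝ := fun p =>
    (x p.1 * x p.2 * x (p.1 + p.2) + (1 - x p.1) * (1 - x p.2) * (1 - x (p.1 + p.2)))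
    - (x' p.1 * x' p.2 * x' (p.1 + p.2) + (1 - x' p.1) * (1 - x' p.2) * (1 - x' (p.1 + p.2)))
    with hd
  have hF : F n x - F n x' = ∑ p ∈ S, d p := by
    rw [F, F, ← Finset.sum_sub_distrib]
  rw [hF]
  -- split into parts
  have hsplit : ∑ p ∈ S, d p =
      ∑ p ∈ S.filter (fun p => p.1 = r), d p
      + ∑ p ∈ S.filter (fun p => p.2 = r), d p
      + ∑ p ∈ S.filter (fun p => p.1 + p.2 = r), d p := by
    rw [← Finset.sum_filter_add_sum_filter_not S (fun p => p.1 = r ∨ p.2 = r ∨ p.1 + p.2 = r)]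
    have h0 : ∑ p ∈ S.filter (fun p => ¬(p.1 = r ∨ p.2 = r ∨ p.1 + p.2 = r)), d p = 0 := by
      apply Finset.sum_eq_zero
      intro p hp
      simp only [Finset.mem_filter] at hp
      push_neg at hp
      obtain ⟨-, h1, h2, h3⟩ := hp
      simp only [hd, hxr _ h1, hxr _ h2, hxr _ h3, sub_self]
    rw [h0, add_zero]
    have heq : S.filter (fun p => p.1 = r ∨ p.2 = r ∨ p.1 + p.2 = r)
        = (S.filter (fun p => p.1 = r)) ∪ (S.filter (fun p => p.2 = r))
          ∪ (S.filter (fun p => p.1 + p.2 = r)) := by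
      ext p; simp only [Finset.mem_filter, Finset.mem_union]; tauto
    rw [heq]
    rw [Finset.sum_union (Finset.disjoint_left.mpr ?h1), Finset.sum_union (Finset.disjoint_left.mpr ?h2)]
    case h1 =>
      intro p hp hq
      simp only [Finset.mem_union, Finset.mem_filter, hS, Finset.mem_product, Finset.mem_Icc] at hp hq
      omega
    case h2 =>
      intro p hp hq
      simp only [Finset.mem_filter, hS, Finset.mem_product, Finset.mem_Icc] at hp hq
      omega
  rw [hsplit]
  have hA : ∑ p ∈ S.filter (fun p => p.1 = r), d p
      = ∑ j ∈ Ioc r (n - r), (2 * x r - 1) * (x j + x (r + j) - 1) := by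
    have himg : S.filter (fun p : ℕ × ℕ => p.1 = r) = (Ioc r (n - r)).image (fun j => (r, j)) := by
      ext ⟨a, b⟩
      simp only [Finset.mem_filter, hS, Finset.mem_product, Finset.mem_Icc, Finset.mem_image,
        Finset.mem_Ioc, Prod.mk.injEq]
      constructor
      · rintro ⟨⟨⟨ha, hb⟩, hlt, hle⟩, rfl⟩
        exact ⟨b, by omega, rfl, rfl⟩
      · rintro ⟨j, hj, rfl, rfl⟩
        omega
    rw [himg, Finset.sum_image (by intro a _ b _ h; simpa using h)]
    apply Finset.sum_congr rfl
    intro j hj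
    simp only [Finset.mem_Ioc] at hj
    simp only [hd, hxr2, hxr j (by omega), hxr (r + j) (by omega)]
    ring
  have hB : ∑ p ∈ S.filter (fun p => p.2 = r), d p
      = ∑ i ∈ Ioc 0 (min (r - 1) (n - r)), (2 * x r - 1) * (x i + x (i + r) - 1) := by
    have himg : S.filter (fun p : ℕ × ℕ => p.2 = r)
        = (Ioc 0 (min (r - 1) (n - r))).image (fun i => (i, r)) := by
      ext ⟨a, b⟩
      simp only [Finset.mem_filter, hS, Finset.mem_product, Finset.mem_Icc, Finset.mem_image,
        Finset.mem_Ioc, Prod.mk.injEq]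
      constructor
      · rintro ⟨⟨⟨ha, hb⟩, hlt, hle⟩, rfl⟩
        exact ⟨a, by omega, rfl, rfl⟩
      · rintro ⟨i, hi, rfl, rfl⟩
        omega
    rw [himg, Finset.sum_image (by intro a _ b _ h; simpa using h)]
    apply Finset.sum_congr rfl
    intro i hi
    simp only [Finset.mem_Ioc, le_min_iff] at hi
    simp only [hd, hxr2, hxr i (by omega), hxr (i + r) (by omega)]
    ring
  have hC : ∑ p ∈ S.filter (fun p => p.1 + p.2 = r), d p
      = ∑ i ∈ Ioc 0 ((r - 1) / 2), (2 * x r - 1) * (x i + x (r - i) - 1) := by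
    have himg : S.filter (fun p : ℕ × ℕ => p.1 + p.2 = r)
        = (Ioc 0 ((r - 1) / 2)).image (fun i => (i, r - i)) := by
      ext ⟨a, b⟩
      simp only [Finset.mem_filter, hS, Finset.mem_product, Finset.mem_Icc, Finset.mem_image,
        Finset.mem_Ioc, Prod.mk.injEq]
      constructor
      · rintro ⟨⟨⟨ha, hb⟩, hlt, hle⟩, hab⟩
        exact ⟨a, by omega, rfl, by omega⟩
      · rintro ⟨i, hi, rfl, rfl⟩
        omega
    rw [himg, Finset.sum_image (by intro a _ b _ h; simp only [Prod.mk.injEq] at h; exact h.1)]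
    apply Finset.sum_congr rfl
    intro i hi
    simp only [Finset.mem_Ioc] at hi
    have hir : i + (r - i) = r := by omega
    simp only [hd, hir, hxr2, hxr i (by omega), hxr (r - i) (by omega)]
    ring
  rw [hA, hB, hC, ← Finset.mul_sum, ← Finset.mul_sum, ← Finset.mul_sum]
  ring

lemma H_diff (n r : ℕ) (x : ℕ → ℝ) (h1 : 1 ≤ r) (h2 : r ≤ n) :
    (∑ i ∈ Icc 1 (n / 2), x i * (x (2 * i) - 1))
      - ∑ i ∈ Icc 1 (n / 2), (Function.update x r (1 - x r)) i
          * ((Function.update x r (1 - x r)) (2 * i) - 1)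
    = (if 2 * r ≤ n then (2 * x r - 1) * (x (2 * r) - 1) else 0)
      + (if r % 2 = 0 then (2 * x r - 1) * x (r / 2) else 0) := by
  classical
  set x' := Function.update x r (1 - x r) with hx'
  have hne : ∀ i, i ≠ r → x' i = x i := fun i hi => Function.update_of_ne hi _ _
  have heq : x' r = 1 - x r := Function.update_self _ _ _
  rw [← Finset.sum_sub_distrib]
  set d : ℕ → ℝ := fun i => x i * (x (2 * i) - 1) - x' i * (x' (2 * i) - 1) with hd
  have hsub : ∑ i ∈ Icc 1 (n / 2), d i
      = ∑ i ∈ (Icc 1 (n / 2)).filter (fun i => i = r ∨ 2 * i = r), d i := by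
    rw [eq_comm]
    apply Finset.sum_filter_of_ne
    intro i _ hne2
    by_contra hcon
    push_neg at hcon
    simp only [hd, hne i hcon.1, hne (2 * i) hcon.2, sub_self] at hne2
    exact hne2 rfl
  rw [hsub]
  have hdr : 2 * r ≤ n → d r = (2 * x r - 1) * (x (2 * r) - 1) := by
    intro _
    simp only [hd, heq, hne (2 * r) (by omega)]
    ring
  have hdr2 : r % 2 = 0 → d (r / 2) = (2 * x r - 1) * x (r / 2) := by
    intro hpar
    have h2r : 2 * (r / 2) = r := by omega
    simp only [hd, h2r, heq, hne (r / 2) (by omega)]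
    ring
  by_cases hc : 2 * r ≤ n
  · by_cases hp : r % 2 = 0
    · have hset : (Icc 1 (n / 2)).filter (fun i => i = r ∨ 2 * i = r) = {r / 2, r} := by
        ext i; simp only [mem_filter, mem_Icc, mem_insert, mem_singleton]; omega
      rw [hset, Finset.sum_insert (by simp only [mem_singleton]; omega),
        Finset.sum_singleton, hdr hc, hdr2 hp, if_pos hc, if_pos hp]
      ring
    · have hset : (Icc 1 (n / 2)).filter (fun i => i = r ∨ 2 * i = r) = {r} := by
        ext i; simp only [mem_filter, mem_Icc, mem_singleton]; omega
      rw [hset, Finset.sum_singleton, hdr hc, if_pos hc, if_neg hp, add_zero]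
  · by_cases hp : r % 2 = 0
    · have hset : (Icc 1 (n / 2)).filter (fun i => i = r ∨ 2 * i = r) = {r / 2} := by
        ext i; simp only [mem_filter, mem_Icc, mem_singleton]; omega
      rw [hset, Finset.sum_singleton, hdr2 hp, if_neg hc, if_pos hp, zero_add]
    · have hset : (Icc 1 (n / 2)).filter (fun i => i = r ∨ 2 * i = r) = ∅ := by
        ext i; simp only [mem_filter, mem_Icc, notMem_empty, iff_false]; omega
      rw [hset, Finset.sum_empty, if_neg hc, if_neg hp, add_zero]

lemma lin_diff (n r : ℕ) (x : ℕ → ℝ) (h1 : 1 ≤ r) (h2 : r ≤ n) :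
    (∑ i ∈ Icc 1 n, x i) - ∑ i ∈ Icc 1 n, (Function.update x r (1 - x r)) i
      = 2 * x r - 1 := by
  rw [← Finset.sum_sub_distrib]
  rw [Finset.sum_eq_single_of_mem r (by simp [mem_Icc]; omega)]
  · rw [Function.update_self]; ring
  · intro b _ hb
    rw [Function.update_of_ne hb, sub_self]

theorem partial_G (n : ℕ) (x : ℕ → ℝ) (hx : ∀ i, x i = 0 ∨ x i = 1) :
    (∀ r : ℕ, (2 * x r - 1) ^ 2 = 1 ∧ (2 * x r - 1) * x r = x r) ∧
    (∀ r : ℕ, 1 ≤ r → r ≤ n →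
      G n x - G n (Function.update x r (1 - x r)) =
        (2 * x r - 1) *
          ((∑ i ∈ Finset.Icc 1 n, x i) + (∑ i ∈ Finset.Icc 1 (n - r), x i)
            - ((n : ℝ) - ((r / 2 : ℕ) : ℝ)) - (1 / 2) * chi (2 * r ≤ n))
        - (1 / 2) * chi (2 * r ≤ n) - 1 / 2) := by
  constructor
  · intro r; rcases hx r with h | h <;> rw [h] <;> norm_num
  · intro r hr1 hr2
    have key : G n x - G n (Function.update x r (1 - x r)) =
        (F n x - F n (Function.update x r (1 - x r)))
        + ((∑ i ∈ Icc 1 (n / 2), x i * (x (2 * i) - 1))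
            - ∑ i ∈ Icc 1 (n / 2), (Function.update x r (1 - x r)) i
                * ((Function.update x r (1 - x r)) (2 * i) - 1))
        - (1 / 2) * ((∑ i ∈ Icc 1 n, x i)
            - ∑ i ∈ Icc 1 n, (Function.update x r (1 - x r)) i) := by
      simp only [G]; ring
    rw [key, F_diff n r x hr1 hr2, H_diff n r x hr1 hr2, lin_diff n r x hr1 hr2,
      Icc1 n x, Icc1 (n - r) x]
    simp only [Finset.sum_sub_distrib, Finset.sum_add_distrib, Finset.sum_const,
      Nat.card_Ioc, nsmul_eq_mul, mul_one, Nat.sub_zero]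
    rw [sum_shift x r (n - r) r]
    rw [show (∑ i ∈ Ioc 0 (min (r - 1) (n - r)), x (i + r))
        = ∑ i ∈ Ioc 0 (min (r - 1) (n - r)), x (r + i) from
      Finset.sum_congr rfl (fun i _ => by rw [Nat.add_comm])]
    rw [sum_shift x 0 (min (r - 1) (n - r)) r]
    rw [sum_reflect x ((r - 1) / 2) r (by omega)]
    rw [show r + (n - r) = n from by omega, show r + r = 2 * r from by omega,
      show r + 0 = r from by omega]
    simp only [chi]
    by_cases hc : 2 * r ≤ n
    · rw [if_pos hc, if_pos hc,
        show min (r - 1) (n - r) = r - 1 from by omega,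
        show r + (r - 1) = 2 * r - 1 from by omega]
      have I1 : (∑ i ∈ Ioc 0 r, x i) + ∑ i ∈ Ioc r (n - r), x i
          = ∑ i ∈ Ioc 0 (n - r), x i := Finset.sum_Ioc_consecutive _ (by omega) (by omega)
      have I2 : (∑ i ∈ Ioc 0 r, x i) = (∑ i ∈ Ioc 0 (r - 1), x i) + x r := by
        have h := Finset.sum_Ioc_succ_top (Nat.zero_le (r - 1)) x
        rwa [show r - 1 + 1 = r from by omega] at h
      have I3 : (∑ i ∈ Ioc r (2 * r), x i) = (∑ i ∈ Ioc r (2 * r - 1), x i) + x (2 * r) := by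
        have h := Finset.sum_Ioc_succ_top (show r ≤ 2 * r - 1 from by omega) x
        rwa [show 2 * r - 1 + 1 = 2 * r from by omega] at h
      have I4 : (∑ i ∈ Ioc r (2 * r), x i) + ∑ i ∈ Ioc (2 * r) n, x i
          = ∑ i ∈ Ioc r n, x i := Finset.sum_Ioc_consecutive _ (by omega) (by omega)
      have I5 : (∑ i ∈ Ioc 0 r, x i) + ∑ i ∈ Ioc r n, x i
          = ∑ i ∈ Ioc 0 n, x i := Finset.sum_Ioc_consecutive _ (by omega) (by omega)
      have c1 : ((n - r - r : ℕ) : ℝ) = (n : ℝ) - 2 * (r : ℝ) := by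
        rw [Nat.sub_sub, Nat.cast_sub (by omega)]; push_cast; ring
      have c2 : ((r - 1 : ℕ) : ℝ) = (r : ℝ) - 1 := by
        rw [Nat.cast_sub (by omega), Nat.cast_one]
      by_cases hp : r % 2 = 0
      · rw [if_pos hp,
          show r - (r - 1) / 2 - 1 = r / 2 from by omega,
          show (r - 1) / 2 = r / 2 - 1 from by omega]
        have I6 : (∑ i ∈ Ioc 0 (r / 2), x i)
            = (∑ i ∈ Ioc 0 (r / 2 - 1), x i) + x (r / 2) := by
          have h := Finset.sum_Ioc_succ_top (Nat.zero_le (r / 2 - 1)) x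
          rwa [show r / 2 - 1 + 1 = r / 2 from by omega] at h
        have I7 : (∑ i ∈ Ioc 0 (r / 2), x i) + ∑ i ∈ Ioc (r / 2) (r - 1), x i
            = ∑ i ∈ Ioc 0 (r - 1), x i := Finset.sum_Ioc_consecutive _ (by omega) (by omega)
        have c3 : ((r / 2 - 1 : ℕ) : ℝ) = ((r / 2 : ℕ) : ℝ) - 1 := by
          rw [Nat.cast_sub (by omega), Nat.cast_one]
        have c4 : (r : ℝ) = 2 * ((r / 2 : ℕ) : ℝ) := by
          exact_mod_cast congrArg (Nat.cast (R := ℝ)) (show r = 2 * (r / 2) from by omega)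
        rcases hx r with h0 | h0 <;> rw [h0] <;>
          linarith [I1, I2, I3, I4, I5, I6, I7, c1, c2, c3, c4]
      · rw [if_neg hp,
          show r - (r - 1) / 2 - 1 = r / 2 from by omega,
          show (r - 1) / 2 = r / 2 from by omega]
        have I6 : (∑ i ∈ Ioc 0 (r / 2), x i) + ∑ i ∈ Ioc (r / 2) (r - 1), x i
            = ∑ i ∈ Ioc 0 (r - 1), x i := Finset.sum_Ioc_consecutive _ (by omega) (by omega)
        have c4 : (r : ℝ) = 2 * ((r / 2 : ℕ) : ℝ) + 1 := by
          exact_mod_cast congrArg (Nat.cast (R := ℝ)) (show r = 2 * (r / 2) + 1 from by omega)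
        rcases hx r with h0 | h0 <;> rw [h0] <;>
          linarith [I1, I2, I3, I4, I5, I6, c1, c2, c4]
    · rw [if_neg hc, if_neg hc,
        show min (r - 1) (n - r) = n - r from by omega,
        show r + (n - r) = n from by omega]
      have E1 : (∑ i ∈ Ioc r (n - r), x i) = 0 := by
        rw [Finset.Ioc_eq_empty (by omega), Finset.sum_empty]
      have E2 : (∑ i ∈ Ioc (2 * r) n, x i) = 0 := by
        rw [Finset.Ioc_eq_empty (by omega), Finset.sum_empty]
      have I2 : (∑ i ∈ Ioc 0 r, x i) = (∑ i ∈ Ioc 0 (r - 1), x i) + x r := by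
        have h := Finset.sum_Ioc_succ_top (Nat.zero_le (r - 1)) x
        rwa [show r - 1 + 1 = r from by omega] at h
      have I5 : (∑ i ∈ Ioc 0 r, x i) + ∑ i ∈ Ioc r n, x i
          = ∑ i ∈ Ioc 0 n, x i := Finset.sum_Ioc_consecutive _ (by omega) (by omega)
      have c1 : ((n - r - r : ℕ) : ℝ) = 0 := by
        rw [show n - r - r = 0 from by omega, Nat.cast_zero]
      have c2 : ((n - r : ℕ) : ℝ) = (n : ℝ) - (r : ℝ) := by
        rw [Nat.cast_sub (by omega)]
      by_cases hp : r % 2 = 0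
      · rw [if_pos hp,
          show r - (r - 1) / 2 - 1 = r / 2 from by omega,
          show (r - 1) / 2 = r / 2 - 1 from by omega]
        have I6 : (∑ i ∈ Ioc 0 (r / 2), x i)
            = (∑ i ∈ Ioc 0 (r / 2 - 1), x i) + x (r / 2) := by
          have h := Finset.sum_Ioc_succ_top (Nat.zero_le (r / 2 - 1)) x
          rwa [show r / 2 - 1 + 1 = r / 2 from by omega] at h
        have I7 : (∑ i ∈ Ioc 0 (r / 2), x i) + ∑ i ∈ Ioc (r / 2) (r - 1), x i
            = ∑ i ∈ Ioc 0 (r - 1), x i := Finset.sum_Ioc_consecutive _ (by omega) (by omega)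
        have c3 : ((r / 2 - 1 : ℕ) : ℝ) = ((r / 2 : ℕ) : ℝ) - 1 := by
          rw [Nat.cast_sub (by omega), Nat.cast_one]
        have c4 : (r : ℝ) = 2 * ((r / 2 : ℕ) : ℝ) := by
          exact_mod_cast congrArg (Nat.cast (R := ℝ)) (show r = 2 * (r / 2) from by omega)
        rcases hx r with h0 | h0 <;> rw [h0] <;>
          linarith [E1, E2, I2, I5, I6, I7, c1, c2, c3, c4]
      · rw [if_neg hp,
          show r - (r - 1) / 2 - 1 = r / 2 from by omega,
          show (r - 1) / 2 = r / 2 from by omega]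
        have I6 : (∑ i ∈ Ioc 0 (r / 2), x i) + ∑ i ∈ Ioc (r / 2) (r - 1), x i
            = ∑ i ∈ Ioc 0 (r - 1), x i := Finset.sum_Ioc_consecutive _ (by omega) (by omega)
        have c4 : (r : ℝ) = 2 * ((r / 2 : ℕ) : ℝ) + 1 := by
          exact_mod_cast congrArg (Nat.cast (R := ℝ)) (show r = 2 * (r / 2) + 1 from by omega)
        rcases hx r with h0 | h0 <;> rw [h0] <;>
          linarith [E1, E2, I2, I5, I6, c1, c2, c4]
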